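/- Let V be a k-dimensional totally null complex subspace of ℂⁿ with the standard Hermitian form of signature (l,j), l ≥ j ≥ k. Then the real Lie algebra h of all a ∈ su(l,j) with a(ℂⁿ) ⊆ V has real dimension k². -/

import Mathlib

open Matrix

/-- The diagonal matrix of the Hermitian form of signature `(l, n − l)` on `ℂⁿ`. -/
noncomputable def etaMat (l n : ℕ) : Matrix (Fin n) (Fin n) ℂ :=
  Matrix.diagonal fun i => if (i : ℕ) < l then (1 : ℂ) else -1

/-- The real subspace `h = {a ∈ su(l, n−l) : range a ⊆ V}` of the complex `n × n`
matrices: traceless matrices, skew-adjoint for the Hermitian form determined by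
`etaMat l n`, whose range is contained in `V`. -/
noncomputable def hSub (l n : ℕ) (V : Submodule ℂ (Fin n → ℂ)) :
    Submodule ℝ (Matrix (Fin n) (Fin n) ℂ) where
  carrier := {a | Matrix.trace a = 0 ∧ aᴴ * etaMat l n + etaMat l n * a = 0 ∧
    ∀ x : Fin n → ℂ, a.mulVec x ∈ V}
  zero_mem' := ⟨by simp, by simp, fun x => by simp [Matrix.zero_mulVec]⟩
  add_mem' := by
    rintro a b ⟨ta, sa, ra⟩ ⟨tb, sb, rb⟩
    refine ⟨by simp [ta, tb], ?_, fun x => ?_⟩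
    · rw [Matrix.conjTranspose_add, Matrix.add_mul, Matrix.mul_add,
        show aᴴ * etaMat l n + bᴴ * etaMat l n + (etaMat l n * a + etaMat l n * b)
          = (aᴴ * etaMat l n + etaMat l n * a) + (bᴴ * etaMat l n + etaMat l n * b) from by abel,
        sa, sb, add_zero]
    · rw [Matrix.add_mulVec]
      exact V.add_mem (ra x) (rb x)
  smul_mem' := by
    rintro c a ⟨ta, sa, ra⟩
    refine ⟨by rw [Matrix.trace_smul, ta, smul_zero], ?_, fun x => ?_⟩
    · rw [Matrix.conjTranspose_smul, star_trivial, Matrix.smul_mul, Matrix.mul_smul,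
        ← smul_add, sa, smul_zero]
    · rw [Matrix.smul_mulVec]
      exact V.smul_of_tower_mem c (ra x)


/-- Skew-Hermitian k×k complex matrices, as a real submodule. -/
noncomputable def skewSub (k : ℕ) : Submodule ℝ (Matrix (Fin k) (Fin k) ℂ) where
  carrier := {N | Nᴴ = -N}
  zero_mem' := by simp
  add_mem' := by
    intro a b ha hb
    simp only [Set.mem_setOf_eq] at *
    rw [conjTranspose_add, ha, hb, neg_add]
  smul_mem' := by
    intro c a ha
    simp only [Set.mem_setOf_eq] at *
    ext i j
    have h := congrFun (congrFun ha i) j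
    simp only [conjTranspose_apply, Matrix.neg_apply] at h
    simp only [conjTranspose_apply, Matrix.smul_apply, Matrix.neg_apply, star_smul, h]
    simp

noncomputable def selfSub (k : ℕ) : Submodule ℝ (Matrix (Fin k) (Fin k) ℂ) where
  carrier := {N | Nᴴ = N}
  zero_mem' := by simp
  add_mem' := by
    intro a b ha hb
    simp only [Set.mem_setOf_eq] at *
    rw [conjTranspose_add, ha, hb]
  smul_mem' := by
    intro c a ha
    simp only [Set.mem_setOf_eq] at *
    ext i j
    simp [conjTranspose_apply, ha, ← conjTranspose_apply]

noncomputable def selfEquivSkew (k : ℕ) : selfSub k ≃ₗ[ℝ] skewSub k where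
  toFun x := ⟨Complex.I • (x : Matrix (Fin k) (Fin k) ℂ), by
    have hx := x.2
    simp only [selfSub, Submodule.mem_mk, Set.mem_setOf_eq] at hx
    show (Complex.I • (x : Matrix (Fin k) (Fin k) ℂ))ᴴ = _
    rw [conjTranspose_smul, hx, Complex.star_def, Complex.conj_I, neg_smul]⟩
  invFun y := ⟨(-Complex.I) • (y : Matrix (Fin k) (Fin k) ℂ), by
    have hy := y.2
    simp only [skewSub, Submodule.mem_mk, Set.mem_setOf_eq] at hy
    show ((-Complex.I) • (y : Matrix (Fin k) (Fin k) ℂ))ᴴ = _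
    rw [conjTranspose_smul, hy, Complex.star_def]
    simp⟩
  map_add' x y := by ext : 1; simp
  map_smul' c x := by
    ext : 1
    show Complex.I • (c • (x : Matrix (Fin k) (Fin k) ℂ)) = c • (Complex.I • _)
    rw [smul_comm]
  left_inv x := by ext : 1; simp [smul_smul]
  right_inv y := by ext : 1; simp [smul_smul]

theorem finrank_skewSub (k : ℕ) : Module.finrank ℝ (skewSub k) = k ^ 2 := by
  haveI : FiniteDimensional ℝ (Matrix (Fin k) (Fin k) ℂ) := by
    exact Module.Finite.matrix
  have hsup : selfSub k ⊔ skewSub k = ⊤ := by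
    rw [eq_top_iff]
    intro A _
    have : A = ((1/2 : ℝ) • (A + Aᴴ)) + ((1/2 : ℝ) • (A - Aᴴ)) := by
      ext i j; simp; ring
    rw [this]
    refine Submodule.add_mem _ (Submodule.mem_sup_left ?_) (Submodule.mem_sup_right ?_)
    · refine Submodule.smul_mem _ _ ?_
      show (A + Aᴴ)ᴴ = A + Aᴴ
      rw [conjTranspose_add, conjTranspose_conjTranspose, add_comm]
    · refine Submodule.smul_mem _ _ ?_
      show (A - Aᴴ)ᴴ = -(A - Aᴴ)
      rw [conjTranspose_sub, conjTranspose_conjTranspose, neg_sub]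
  have hinf : selfSub k ⊓ skewSub k = ⊥ := by
    rw [eq_bot_iff]
    rintro A ⟨h1, h2⟩
    have h1' : Aᴴ = A := h1
    have h2' : Aᴴ = -A := h2
    have : A = 0 := by
      have := h1'.symm.trans h2'
      have h3 : A + A = 0 := by rw [eq_neg_iff_add_eq_zero] at this; exact this
      ext i j
      have := congrFun (congrFun h3 i) j
      simp only [Matrix.add_apply, Matrix.zero_apply] at this ⊢
      have h4 : (2 : ℂ) * A i j = 0 := by linear_combination this
      simpa using (mul_eq_zero.mp h4).resolve_left (by norm_num)
    simp [this]
  have hd := Submodule.finrank_sup_add_finrank_inf_eq (selfSub k) (skewSub k)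
  rw [hsup, hinf] at hd
  have heq : Module.finrank ℝ (selfSub k) = Module.finrank ℝ (skewSub k) :=
    (selfEquivSkew k).finrank_eq
  have htop : Module.finrank ℝ (⊤ : Submodule ℝ (Matrix (Fin k) (Fin k) ℂ)) = 2 * k ^ 2 := by
    rw [finrank_top, Module.finrank_matrix, Complex.finrank_real_complex, Fintype.card_fin]
    ring
  rw [htop, finrank_bot, heq] at hd
  omega


section aux
variable {n k : ℕ} (V : Submodule ℂ (Fin n → ℂ)) (b : Module.Basis (Fin k) ℂ V)

/-- The matrix whose columns are the basis vectors of `V`. -/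
noncomputable def PMat : Matrix (Fin n) (Fin k) ℂ :=
  Matrix.of fun i t => (b t : Fin n → ℂ) i

lemma PMat_mulVec_eq (y : Fin k → ℂ) :
    (PMat V b).mulVec y = ((∑ t, y t • b t : V) : Fin n → ℂ) := by
  ext r
  simp only [Matrix.mulVec, dotProduct, PMat, Matrix.of_apply]
  rw [show ((∑ t, y t • b t : V) : Fin n → ℂ) = ∑ t, y t • ((b t : Fin n → ℂ)) by
    push_cast; rfl]
  simp [Finset.sum_apply, mul_comm]

lemma PMat_mulVec_mem (y : Fin k → ℂ) : (PMat V b).mulVec y ∈ V := by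
  rw [PMat_mulVec_eq]; exact Submodule.coe_mem _

lemma PMat_mulVec_eq_zero {y : Fin k → ℂ} (h : (PMat V b).mulVec y = 0) : y = 0 := by
  rw [PMat_mulVec_eq] at h
  have h2 : (∑ t, y t • b t : V) = 0 := Submodule.coe_eq_zero.mp h
  have h3 := Fintype.linearIndependent_iff.mp b.linearIndependent y h2
  funext t; exact h3 t

lemma PMat_gram_isUnit : IsUnit ((PMat V b)ᴴ * PMat V b) := by
  rw [← Matrix.mulVec_injective_iff_isUnit]
  have key : ∀ w, ((PMat V b)ᴴ * PMat V b).mulVec w = 0 → w = 0 := by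
    intro w hw
    set u := (PMat V b).mulVec w with hu
    have hstar : star u = star w ᵥ* (PMat V b)ᴴ := by rw [hu, star_mulVec]
    have hdot : star u ⬝ᵥ u = 0 := by
      calc star u ⬝ᵥ u = (star w ᵥ* (PMat V b)ᴴ) ⬝ᵥ u := by rw [hstar]
        _ = star w ⬝ᵥ ((PMat V b)ᴴ *ᵥ u) := by rw [← dotProduct_mulVec]
        _ = star w ⬝ᵥ (((PMat V b)ᴴ * PMat V b) *ᵥ w) := by rw [hu, mulVec_mulVec]
        _ = 0 := by rw [hw, dotProduct_zero]
    have hnormsq : ∑ i, Complex.normSq (u i) = 0 := by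
      have : ((∑ i, Complex.normSq (u i) : ℝ) : ℂ) = 0 := by
        rw [← hdot]
        push_cast
        simp only [dotProduct, Pi.star_apply]
        refine Finset.sum_congr rfl fun i _ => ?_
        rw [Complex.normSq_eq_conj_mul_self, Complex.star_def]
      exact_mod_cast this
    have hui : ∀ i, u i = 0 := by
      intro i
      have := (Finset.sum_eq_zero_iff_of_nonneg
        (fun i _ => Complex.normSq_nonneg (u i))).mp hnormsq i (Finset.mem_univ i)
      exact Complex.normSq_eq_zero.mp this
    exact PMat_mulVec_eq_zero V b (funext hui)
  intro y z hyz
  have : ((PMat V b)ᴴ * PMat V b).mulVec (y - z) = 0 := by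
    rw [Matrix.mulVec_sub, hyz, sub_self]
  have := key _ this
  exact sub_eq_zero.mp this

end aux

section orth
variable {l n k : ℕ} (V : Submodule ℂ (Fin n → ℂ)) (b : Module.Basis (Fin k) ℂ V)

lemma PMat_eta_orth
    (hnull : ∀ v ∈ V, ∀ w ∈ V,
      ∑ i : Fin n, (if (i : ℕ) < l then (1 : ℂ) else -1) * (starRingEnd ℂ) (v i) * w i = 0) :
    (PMat V b)ᴴ * (etaMat l n * PMat V b) = 0 := by
  ext s t
  rw [Matrix.zero_apply, Matrix.mul_apply]
  have h := hnull (b s) (Submodule.coe_mem _) (b t) (Submodule.coe_mem _)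
  rw [← h]
  refine Finset.sum_congr rfl fun i _ => ?_
  rw [conjTranspose_apply, etaMat, Matrix.diagonal_mul]
  simp only [PMat, Matrix.of_apply, Complex.star_def]
  ring

end orth

lemma etaMat_mul_self (l n : ℕ) : etaMat l n * etaMat l n = 1 := by
  ext i i'
  rw [etaMat, diagonal_mul_diagonal]
  by_cases h : i = i'
  · subst h
    rw [diagonal_apply_eq, Matrix.one_apply_eq]
    by_cases h2 : (i : ℕ) < l <;> simp [h2]
  · rw [diagonal_apply_ne _ h, Matrix.one_apply_ne h]

lemma etaMat_conjTranspose (l n : ℕ) : (etaMat l n)ᴴ = etaMat l n := by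
  ext i i'
  rw [etaMat, conjTranspose_apply]
  by_cases h : i' = i
  · subst h
    by_cases h2 : (i' : ℕ) < l <;> simp [h2]
  · rw [diagonal_apply_ne _ h, diagonal_apply_ne _ fun hh => h hh.symm, star_zero]

theorem aux_main (l n k : ℕ) (V : Submodule ℂ (Fin n → ℂ))
    (hdim : Module.finrank ℂ V = k)
    (hnull : ∀ v ∈ V, ∀ w ∈ V,
      ∑ i : Fin n, (if (i : ℕ) < l then (1 : ℂ) else -1) * (starRingEnd ℂ) (v i) * w i = 0) :
    Module.finrank ℝ (hSub l n V) = k ^ 2 := by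
  classical
  let b : Module.Basis (Fin k) ℂ V := Module.finBasisOfFinrankEq ℂ V hdim
  set P : Matrix (Fin n) (Fin k) ℂ := PMat V b with hPdef
  set η : Matrix (Fin n) (Fin n) ℂ := etaMat l n with hetadef
  set G : Matrix (Fin k) (Fin k) ℂ := Pᴴ * P with hGdef
  have hGu : IsUnit G := PMat_gram_isUnit V b
  have hGdet : IsUnit G.det := (Matrix.isUnit_iff_isUnit_det G).mp hGu
  have hGl : G⁻¹ * G = 1 := Matrix.nonsing_inv_mul G hGdet
  have hGr : G * G⁻¹ = 1 := Matrix.mul_nonsing_inv G hGdet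
  have hGH : Gᴴ = G := by
    rw [hGdef, conjTranspose_mul, conjTranspose_conjTranspose]
  have hGiH : G⁻¹ᴴ = G⁻¹ := by rw [conjTranspose_nonsing_inv, hGH]
  have hee : η * η = 1 := etaMat_mul_self l n
  have heH : ηᴴ = η := etaMat_conjTranspose l n
  have hO : Pᴴ * (η * P) = 0 := PMat_eta_orth V b hnull
  -- membership of the image
  have memF : ∀ N : Matrix (Fin k) (Fin k) ℂ, Nᴴ = -N →
      P * N * Pᴴ * η ∈ hSub l n V := by
    intro N hN
    refine ⟨?_, ?_, ?_⟩
    · calc Matrix.trace (P * N * Pᴴ * η)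
          = Matrix.trace (P * (N * (Pᴴ * η))) := by simp only [Matrix.mul_assoc]
        _ = Matrix.trace ((N * (Pᴴ * η)) * P) := Matrix.trace_mul_comm _ _
        _ = Matrix.trace (N * (Pᴴ * (η * P))) := by simp only [Matrix.mul_assoc]
        _ = 0 := by rw [hO, Matrix.mul_zero, Matrix.trace_zero]
    · have h1 : (P * N * Pᴴ * η)ᴴ = -(η * (P * (N * Pᴴ))) := by
        simp only [conjTranspose_mul, conjTranspose_conjTranspose, heH, hN,
          Matrix.neg_mul, Matrix.mul_neg, Matrix.mul_assoc]
      rw [h1]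
      simp only [Matrix.neg_mul, Matrix.mul_assoc]
      exact neg_add_cancel _
    · intro x
      have h2 : P * N * Pᴴ * η = P * (N * (Pᴴ * η)) := by simp only [Matrix.mul_assoc]
      rw [h2, ← Matrix.mulVec_mulVec]
      exact PMat_mulVec_mem V b _
  let F : skewSub k →ₗ[ℝ] hSub l n V :=
    { toFun := fun N => ⟨P * (N : Matrix (Fin k) (Fin k) ℂ) * Pᴴ * η, memF _ N.2⟩
      map_add' := fun x y => Subtype.ext (by
        simp [Matrix.add_mul, Matrix.mul_add])
      map_smul' := fun c x => Subtype.ext (by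
        simp [Matrix.mul_smul, Matrix.smul_mul]) }
  have hFinj : Function.Injective F := by
    have key : ∀ N : Matrix (Fin k) (Fin k) ℂ, P * N * Pᴴ * η = 0 → N = 0 := by
      intro N h0
      have h1 : P * N * Pᴴ = 0 := by
        have h1' := congrArg (· * η) h0
        simp only [Matrix.zero_mul] at h1'
        calc P * N * Pᴴ = P * N * Pᴴ * (η * η) := by rw [hee, Matrix.mul_one]
          _ = P * N * Pᴴ * η * η := by simp only [Matrix.mul_assoc]
          _ = 0 := by rw [h1']
      have h2 : G * N * G = 0 := by
        calc G * N * G = Pᴴ * (P * N * Pᴴ) * P := by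
              rw [hGdef]; simp only [Matrix.mul_assoc]
          _ = 0 := by rw [h1, Matrix.mul_zero, Matrix.zero_mul]
      calc N = (G⁻¹ * G) * N * (G * G⁻¹) := by rw [hGl, hGr, Matrix.one_mul, Matrix.mul_one]
        _ = G⁻¹ * (G * N * G) * G⁻¹ := by simp only [Matrix.mul_assoc]
        _ = 0 := by rw [h2, Matrix.mul_zero, Matrix.zero_mul]
    intro x y hxy
    have hco : P * (x : Matrix (Fin k) (Fin k) ℂ) * Pᴴ * η
        = P * (y : Matrix (Fin k) (Fin k) ℂ) * Pᴴ * η := congrArg Subtype.val hxy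
    have hsub : P * ((x : Matrix (Fin k) (Fin k) ℂ) - (y : Matrix (Fin k) (Fin k) ℂ)) * Pᴴ * η = 0 := by
      rw [Matrix.mul_sub, Matrix.sub_mul, Matrix.sub_mul, sub_eq_zero]
      exact hco
    have := key _ hsub
    exact Subtype.ext (sub_eq_zero.mp this)
  have hFsurj : Function.Surjective F := by
    rintro ⟨A, htr, hsk, hrange⟩
    have haH : Aᴴ = -(η * A * η) := by
      have h1 : Aᴴ * η = -(η * A) := by
        rw [← add_eq_zero_iff_eq_neg]; exact hsk
      calc Aᴴ = Aᴴ * (η * η) := by rw [hee, Matrix.mul_one]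
        _ = (Aᴴ * η) * η := by rw [Matrix.mul_assoc]
        _ = -(η * A) * η := by rw [h1]
        _ = -(η * A * η) := by rw [Matrix.neg_mul]
    have hAeq : η * Aᴴ * η = -A := by
      rw [haH]
      calc η * -(η * A * η) * η = -(η * (η * A * η) * η) := by
            rw [Matrix.mul_neg, Matrix.neg_mul]
        _ = -((η * η) * A * (η * η)) := by simp only [Matrix.mul_assoc]
        _ = -A := by rw [hee, Matrix.one_mul, Matrix.mul_one]
    have hAeta : A * η = -(η * Aᴴ) := by
      have h2 := congrArg (· * η) hAeq
      simp only [Matrix.neg_mul] at h2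
      have h3 : η * Aᴴ * (η * η) = -(A * η) := by
        rw [← Matrix.mul_assoc, h2]
      rw [hee, Matrix.mul_one] at h3
      rw [eq_neg_iff_add_eq_zero] at h3 ⊢
      rw [add_comm]; exact h3
    -- the coefficient matrix
    let vi : Fin n → V := fun i => ⟨A.mulVec (Pi.single i 1), hrange _⟩
    let Q : Matrix (Fin k) (Fin n) ℂ := Matrix.of fun t i => b.repr (vi i) t
    have hQ : P * Q = A := by
      ext r i
      rw [Matrix.mul_apply]
      have h1 := congrArg (fun v : V => (v : Fin n → ℂ) r) (b.sum_repr (vi i))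
      beta_reduce at h1
      calc ∑ t, P r t * Q t i = ∑ t, b.repr (vi i) t • ((b t : Fin n → ℂ) r) := by
            refine Finset.sum_congr rfl fun t _ => ?_
            simp only [hPdef, PMat, Matrix.of_apply, Q, smul_eq_mul]
            ring
        _ = ((∑ t, b.repr (vi i) t • b t : V) : Fin n → ℂ) r := by
            push_cast
            simp only [Finset.sum_apply, Pi.smul_apply]
        _ = ((vi i : V) : Fin n → ℂ) r := h1
        _ = A r i := by simp [vi, Matrix.mulVec_single]
    have hQH : Aᴴ = Qᴴ * Pᴴ := by rw [← hQ, conjTranspose_mul]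
    set K : Matrix (Fin k) (Fin k) ℂ := Pᴴ * (A * (η * P)) with hKdef
    have hKH : Kᴴ = -K := by
      rw [hKdef, conjTranspose_mul, conjTranspose_mul, conjTranspose_mul,
        conjTranspose_conjTranspose, heH, haH]
      calc (Pᴴ * η) * -(η * A * η) * P = -(Pᴴ * ((η * η) * A * η * P)) := by
            simp only [Matrix.mul_neg, Matrix.neg_mul, Matrix.mul_assoc]
        _ = -(Pᴴ * (A * (η * P))) := by rw [hee, Matrix.one_mul]; simp only [Matrix.mul_assoc]
    set N : Matrix (Fin k) (Fin k) ℂ := G⁻¹ * K * G⁻¹ with hNdef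
    have hNH : Nᴴ = -N := by
      rw [hNdef, conjTranspose_mul, conjTranspose_mul, hGiH, hKH]
      simp only [Matrix.mul_neg, Matrix.neg_mul, Matrix.mul_assoc]
    have hPA : Pᴴ * A = G * Q := by rw [← hQ, ← Matrix.mul_assoc, hGdef]
    have step1 : P * G⁻¹ * (Pᴴ * A) = A := by
      calc P * G⁻¹ * (Pᴴ * A) = P * G⁻¹ * (G * Q) := by rw [hPA]
        _ = P * ((G⁻¹ * G) * Q) := by simp only [Matrix.mul_assoc]
        _ = P * Q := by rw [hGl, Matrix.one_mul]
        _ = A := hQ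
    have hAHP : Aᴴ * P = Qᴴ * G := by
      rw [hQH, Matrix.mul_assoc, hGdef]
    have step2 : A * (η * (P * (G⁻¹ * (Pᴴ * η)))) = A := by
      have hX : Aᴴ * (P * (G⁻¹ * (Pᴴ * η))) = Aᴴ * η := by
        calc Aᴴ * (P * (G⁻¹ * (Pᴴ * η))) = (Aᴴ * P) * (G⁻¹ * (Pᴴ * η)) := by
              rw [Matrix.mul_assoc]
          _ = Qᴴ * ((G * G⁻¹) * (Pᴴ * η)) := by rw [hAHP]; simp only [Matrix.mul_assoc]
          _ = Qᴴ * (Pᴴ * η) := by rw [hGr, Matrix.one_mul]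
          _ = Aᴴ * η := by rw [hQH, Matrix.mul_assoc]
      calc A * (η * (P * (G⁻¹ * (Pᴴ * η)))) = (A * η) * (P * (G⁻¹ * (Pᴴ * η))) := by
            rw [Matrix.mul_assoc]
        _ = -(η * (Aᴴ * (P * (G⁻¹ * (Pᴴ * η))))) := by
            rw [hAeta]; simp only [Matrix.neg_mul, Matrix.mul_assoc]
        _ = -(η * (Aᴴ * η)) := by rw [hX]
        _ = -(η * Aᴴ * η) := by rw [Matrix.mul_assoc]
        _ = A := by rw [hAeq, neg_neg]
    have hFN : P * N * Pᴴ * η = A := by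
      calc P * N * Pᴴ * η
          = (P * G⁻¹ * (Pᴴ * A)) * (η * (P * (G⁻¹ * (Pᴴ * η)))) := by
            rw [hNdef, hKdef]; simp only [Matrix.mul_assoc]
        _ = A * (η * (P * (G⁻¹ * (Pᴴ * η)))) := by rw [step1]
        _ = A := step2
    exact ⟨⟨N, hNH⟩, Subtype.ext hFN⟩
  have := LinearEquiv.finrank_eq (LinearEquiv.ofBijective F ⟨hFinj, hFsurj⟩)
  rw [← this, finrank_skewSub]

/-- If `V` is a `k`-dimensional totally null complex subspace of `ℂⁿ` with the Hermitian
form of signature `(l,j)` (`n = l + j`, `l ≥ j ≥ k`), then the real Lie algebra of all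
`a ∈ su(l,j)` with `a(ℂⁿ) ⊆ V` has real dimension `k²`. -/
theorem stmt14 (l j k : ℕ) (hkj : k ≤ j) (hjl : j ≤ l)
    (V : Submodule ℂ (Fin (l + j) → ℂ)) (hdim : Module.finrank ℂ V = k)
    (hnull : ∀ v ∈ V, ∀ w ∈ V,
      ∑ i : Fin (l + j),
        (if (i : ℕ) < l then (1 : ℂ) else -1) * (starRingEnd ℂ) (v i) * w i = 0) :
    Module.finrank ℝ (hSub l (l + j) V) = k ^ 2 := by
  exact aux_main l (l + j) k V hdim hnull
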